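/- Let β > 0, γ > 0, α ≥ 0, T > 0, z ≥ 0, and define H(p) = p(αγ + β ln p) for p ≥ 1 and H(p) = γα for p < 1. Then the function φ(t) = exp(γα(e^{β(T−t)} − 1)/β)·exp(z·γ·e^{β(T−t)}) satisfies the integral equation φ(t) = e^{γz} + ∫_t^T H(φ(s)) ds for all t ∈ [0,T]. -/

import Mathlib

open Real

theorem phi_solves_ode (α β γ T z : ℝ) (hβ : 0 < β) (hγ : 0 < γ) (hα : 0 ≤ α)
    (hT : 0 < T) (hz : 0 ≤ z)
    (H : ℝ → ℝ)
    (hH : ∀ p, H p = if 1 ≤ p then p * (α * γ + β * Real.log p) else γ * α)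
    (φ : ℝ → ℝ)
    (hφ : ∀ t, φ t =
      Real.exp (γ * α * (Real.exp (β * (T - t)) - 1) / β) *
        Real.exp (z * γ * Real.exp (β * (T - t)))) :
    ∀ t ∈ Set.Icc (0 : ℝ) T, φ t = Real.exp (γ * z) + ∫ s in t..T, H (φ s) := by
  intro t ht
  obtain ⟨ht0, htT⟩ := ht
  set E : ℝ → ℝ := fun s => Real.exp (β * (T - s)) with hE
  have hEd : ∀ s, HasDerivAt E (-β * E s) s := by
    intro s
    have h1 : HasDerivAt (fun s : ℝ => β * (T - s)) (-β) s := by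
      simpa using ((hasDerivAt_id s).const_sub T).const_mul β
    simpa [hE, mul_comm] using h1.exp
  have hφeq : φ = fun s => Real.exp (γ * α * (E s - 1) / β + z * γ * E s) := by
    funext s; rw [hφ, ← Real.exp_add]
  set g : ℝ → ℝ := fun s => γ * α * (E s - 1) / β + z * γ * E s with hg
  set g' : ℝ → ℝ := fun s => γ * α * (-β * E s) / β + z * γ * (-β * E s) with hg'
  have hgd : ∀ s, HasDerivAt g (g' s) s := by
    intro s
    have h1 := (((hEd s).sub_const 1).const_mul (γ * α)).div_const β
    have h2 := (hEd s).const_mul (z * γ)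
    exact h1.add h2
  have hφd : ∀ s, HasDerivAt φ (Real.exp (g s) * g' s) s := by
    intro s; rw [hφeq]; exact (hgd s).exp
  have hcontE : Continuous E := by fun_prop
  have hcont : Continuous (fun s => Real.exp (g s) * g' s) := by
    apply Continuous.mul
    · exact (Continuous.rexp (by fun_prop))
    · fun_prop
  have hFTC : (∫ s in t..T, Real.exp (g s) * g' s) = φ T - φ t := by
    apply intervalIntegral.integral_eq_sub_of_hasDerivAt
    · intro s _; exact hφd s
    · exact hcont.intervalIntegrable t T
  have hkey : ∀ s ∈ Set.uIcc t T, H (φ s) = -(Real.exp (g s) * g' s) := by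
    intro s hs
    rw [Set.uIcc_of_le htT] at hs
    have hsT : s ≤ T := hs.2
    have hE1 : 1 ≤ E s := by
      apply Real.one_le_exp
      nlinarith
    have hg0 : 0 ≤ g s := by
      have : 0 ≤ γ * α * (E s - 1) / β := by
        apply div_nonneg _ hβ.le
        have : 0 ≤ E s - 1 := by linarith
        positivity
      have h2 : 0 ≤ z * γ * E s := by positivity
      simp only [hg]; linarith
    have hφ1 : 1 ≤ φ s := by
      rw [hφeq]; simpa using Real.one_le_exp hg0
    rw [hH, if_pos hφ1, hφeq]
    simp only [Real.log_exp]
    simp only [hg, hg']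
    field_simp
    ring
  have hφT : φ T = Real.exp (γ * z) := by
    rw [hφ T]
    simp [mul_comm]
  have : (∫ s in t..T, H (φ s)) = ∫ s in t..T, -(Real.exp (g s) * g' s) :=
    intervalIntegral.integral_congr hkey
  rw [this, intervalIntegral.integral_neg, hFTC, hφT]
  ring
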